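/- For every positive integer q there exists a tree T that is γ-q-critical. -/

import Mathlib

open SimpleGraph

/-- `D` is a dominating set of `G`. -/
def SimpleGraph.IsDomSet {V : Type*} (G : SimpleGraph V) (D : Set V) : Prop :=
  ∀ v ∉ D, ∃ u ∈ D, G.Adj u v

/-- The domination number of `G`. -/
noncomputable def SimpleGraph.domNum {V : Type*} [Fintype V] (G : SimpleGraph V) : ℕ :=
  sInf {k | ∃ D : Finset V, D.card = k ∧ G.IsDomSet ↑D}

/-- The graph obtained from `G` by subdividing each edge in `F` once: each `e ∈ F`
contributes a new vertex adjacent to the two endpoints of `e`, and the edges of `F`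
are removed. -/
def SimpleGraph.subdiv {V : Type*} (G : SimpleGraph V) (F : Finset (Sym2 V)) :
    SimpleGraph (V ⊕ {e : Sym2 V // e ∈ F}) :=
  SimpleGraph.fromRel (fun a b => match a, b with
    | Sum.inl u, Sum.inl v => G.Adj u v ∧ s(u, v) ∉ F
    | Sum.inl u, Sum.inr e => u ∈ (e : Sym2 V)
    | _, _ => False)

/-- `G` is `γ`-`q`-critical: subdividing any `q` edges increases the domination number,
while some set of `q - 1` edges can be subdivided without increasing it. -/
def SimpleGraph.IsQCritical {V : Type*} [Fintype V] (G : SimpleGraph V) (q : ℕ) : Prop :=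
  (∀ F : Finset (Sym2 V), ↑F ⊆ G.edgeSet → F.card = q →
      G.domNum < (G.subdiv F).domNum) ∧
  (∃ F : Finset (Sym2 V), ↑F ⊆ G.edgeSet ∧ F.card = q - 1 ∧
      (G.subdiv F).domNum = G.domNum)

section Infra

variable {V : Type*} [Fintype V] (G : SimpleGraph V)

lemma domNum_set_nonempty : {k | ∃ D : Finset V, D.card = k ∧ G.IsDomSet ↑D}.Nonempty := by
  classical
  exact ⟨(Finset.univ : Finset V).card, Finset.univ, rfl, fun v hv => absurd (by simp) hv⟩

lemma exists_min_domset : ∃ D : Finset V, D.card = G.domNum ∧ G.IsDomSet ↑D :=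
  Nat.sInf_mem (domNum_set_nonempty G)

lemma domNum_le (D : Finset V) (h : G.IsDomSet ↑D) : G.domNum ≤ D.card :=
  Nat.sInf_le ⟨D, rfl, h⟩

/-- A 2-packing lower bound for the domination number. -/
lemma packing_le_domNum (P : Finset V)
    (hP : ∀ p ∈ P, ∀ p' ∈ P, p ≠ p' → ∀ d, (d = p ∨ G.Adj d p) → (d = p' ∨ G.Adj d p') → False) :
    P.card ≤ G.domNum := by
  classical
  obtain ⟨D, hcard, hdom⟩ := exists_min_domset G
  rw [← hcard]
  have hsel : ∀ p : V, ∃ d, d ∈ D ∧ (d = p ∨ G.Adj d p) := by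
    intro p
    by_cases hp : p ∈ D
    · exact ⟨p, hp, Or.inl rfl⟩
    · obtain ⟨u, hu, hadj⟩ := hdom p (by simpa using hp)
      exact ⟨u, by simpa using hu, Or.inr hadj⟩
  apply Finset.card_le_card_of_injOn (fun p => (hsel p).choose)
  · intro p _
    exact ((hsel p).choose_spec).1
  · intro p hp p' hp' heq
    by_contra hne
    replace heq : (hsel p).choose = (hsel p').choose := heq
    have h2 := ((hsel p').choose_spec).2
    rw [← heq] at h2
    exact hP p (Finset.mem_coe.mp hp) p' (Finset.mem_coe.mp hp') hne
      ((hsel p).choose) ((hsel p).choose_spec).2 h2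

end Infra

section SubdivAdj

variable {V : Type*} {G : SimpleGraph V} {F : Finset (Sym2 V)}

lemma subdiv_adj_inl_inl {u v : V} :
    (G.subdiv F).Adj (Sum.inl u) (Sum.inl v) ↔ G.Adj u v ∧ s(u, v) ∉ F := by
  simp only [SimpleGraph.subdiv, fromRel_adj]
  constructor
  · rintro ⟨hne, h | h⟩
    · exact h
    · exact ⟨h.1.symm, by rw [Sym2.eq_swap]; exact h.2⟩
  · intro h
    exact ⟨by simp [h.1.ne], Or.inl h⟩

lemma subdiv_adj_inl_inr {u : V} {e : {e : Sym2 V // e ∈ F}} :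
    (G.subdiv F).Adj (Sum.inl u) (Sum.inr e) ↔ u ∈ (e : Sym2 V) := by
  simp only [SimpleGraph.subdiv, fromRel_adj]
  constructor
  · rintro ⟨hne, h | h⟩
    · exact h
    · exact h.elim
  · intro h
    exact ⟨by simp, Or.inl h⟩

lemma subdiv_adj_inr_inl {u : V} {e : {e : Sym2 V // e ∈ F}} :
    (G.subdiv F).Adj (Sum.inr e) (Sum.inl u) ↔ u ∈ (e : Sym2 V) := by
  rw [adj_comm]; exact subdiv_adj_inl_inr

lemma subdiv_not_adj_inr_inr {e e' : {e : Sym2 V // e ∈ F}} :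
    ¬ (G.subdiv F).Adj (Sum.inr e) (Sum.inr e') := by
  simp only [SimpleGraph.subdiv, fromRel_adj]
  rintro ⟨hne, h | h⟩ <;> exact h

lemma reachable_invariant {W : Type*} {H : SimpleGraph W} (f : W → Prop)
    (h : ∀ a b, H.Adj a b → (f a ↔ f b)) {u v : W} (hr : H.Reachable u v) : f u ↔ f v := by
  obtain ⟨w⟩ := hr
  induction w with
  | nil => exact Iff.rfl
  | cons ha _ ih => exact (h _ _ ha).trans ih

end SubdivAdj

section Spider

variable (q : ℕ)

def ctr : Fin (2*q+1) := ⟨0, by omega⟩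
def mid (i : Fin q) : Fin (2*q+1) := ⟨2*i.val+1, by have := i.isLt; omega⟩
def leaf (i : Fin q) : Fin (2*q+1) := ⟨2*i.val+2, by have := i.isLt; omega⟩

def spider : SimpleGraph (Fin (2*q+1)) :=
  SimpleGraph.fromRel (fun a b =>
    ∃ i : Fin q, (a = ctr q ∧ b = mid q i) ∨ (a = mid q i ∧ b = leaf q i))

variable {q}

lemma ctr_ne_mid {i : Fin q} : ctr q ≠ mid q i := by
  simp [ctr, mid, Fin.ext_iff]
lemma ctr_ne_leaf {i : Fin q} : ctr q ≠ leaf q i := by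
  simp [ctr, leaf, Fin.ext_iff]
lemma mid_ne_leaf {i j : Fin q} : mid q i ≠ leaf q j := by
  simp only [mid, leaf, Fin.ext_iff, ne_eq]
  omega
lemma mid_inj {i j : Fin q} (h : mid q i = mid q j) : i = j := by
  simp only [mid, Fin.ext_iff] at h ⊢
  omega
lemma leaf_inj {i j : Fin q} (h : leaf q i = leaf q j) : i = j := by
  simp only [leaf, Fin.ext_iff] at h ⊢
  omega

lemma spider_adj {a b : Fin (2*q+1)} :
    (spider q).Adj a b ↔ ∃ i : Fin q,
      (a = ctr q ∧ b = mid q i) ∨ (a = mid q i ∧ b = leaf q i) ∨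
      (b = ctr q ∧ a = mid q i) ∨ (b = mid q i ∧ a = leaf q i) := by
  simp only [spider, fromRel_adj]
  constructor
  · rintro ⟨hne, ⟨i, h⟩ | ⟨i, h⟩⟩
    · exact ⟨i, by tauto⟩
    · exact ⟨i, by tauto⟩
  · rintro ⟨i, h | h | h | h⟩
    · exact ⟨h.1 ▸ h.2 ▸ ctr_ne_mid, Or.inl ⟨i, Or.inl h⟩⟩
    · exact ⟨h.1 ▸ h.2 ▸ mid_ne_leaf, Or.inl ⟨i, Or.inr h⟩⟩
    · exact ⟨by rw [h.1, h.2]; exact ctr_ne_mid.symm, Or.inr ⟨i, Or.inl ⟨h.1, h.2⟩⟩⟩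
    · exact ⟨by rw [h.1, h.2]; exact mid_ne_leaf.symm, Or.inr ⟨i, Or.inr ⟨h.1, h.2⟩⟩⟩

lemma adj_ctr {d : Fin (2*q+1)} : (spider q).Adj d (ctr q) ↔ ∃ i, d = mid q i := by
  rw [spider_adj]
  constructor
  · rintro ⟨i, ⟨h1, h2⟩ | ⟨h1, h2⟩ | ⟨h1, h2⟩ | ⟨h1, h2⟩⟩
    · exact absurd h2 ctr_ne_mid
    · exact absurd h2 ctr_ne_leaf
    · exact ⟨i, h2⟩
    · exact absurd h1 ctr_ne_mid
  · rintro ⟨i, rfl⟩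
    exact ⟨i, Or.inr (Or.inr (Or.inl ⟨rfl, rfl⟩))⟩

lemma adj_leaf {d : Fin (2*q+1)} {i : Fin q} :
    (spider q).Adj d (leaf q i) ↔ d = mid q i := by
  rw [spider_adj]
  constructor
  · rintro ⟨j, ⟨h1, h2⟩ | ⟨h1, h2⟩ | ⟨h1, h2⟩ | ⟨h1, h2⟩⟩
    · exact absurd h2.symm mid_ne_leaf
    · exact h1.trans (by rw [leaf_inj h2])
    · exact absurd h1.symm ctr_ne_leaf
    · exact absurd h1.symm mid_ne_leaf
  · rintro rfl
    exact ⟨i, Or.inr (Or.inl ⟨rfl, rfl⟩)⟩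

lemma adj_mid {d : Fin (2*q+1)} {i : Fin q} :
    (spider q).Adj d (mid q i) ↔ d = ctr q ∨ d = leaf q i := by
  rw [spider_adj]
  constructor
  · rintro ⟨j, ⟨h1, h2⟩ | ⟨h1, h2⟩ | ⟨h1, h2⟩ | ⟨h1, h2⟩⟩
    · exact Or.inl h1
    · exact absurd h2 mid_ne_leaf
    · exact absurd h1.symm ctr_ne_mid
    · exact Or.inr (h2.trans (by rw [← mid_inj h1]))
  · rintro (rfl | rfl)
    · exact ⟨i, Or.inl ⟨rfl, rfl⟩⟩
    · exact ⟨i, Or.inr (Or.inr (Or.inr ⟨rfl, rfl⟩))⟩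

lemma vert_cases (v : Fin (2*q+1)) :
    v = ctr q ∨ (∃ i, v = mid q i) ∨ (∃ i, v = leaf q i) := by
  have hv := v.isLt
  rcases Nat.eq_zero_or_pos v.val with h0 | h0
  · exact Or.inl (by simp [ctr, Fin.ext_iff, h0])
  rcases Nat.even_or_odd v.val with ⟨k, hk⟩ | ⟨k, hk⟩
  · exact Or.inr (Or.inr ⟨⟨k-1, by omega⟩, by simp [leaf, Fin.ext_iff]; omega⟩)
  · exact Or.inr (Or.inl ⟨⟨k, by omega⟩, by simp [mid, Fin.ext_iff]; omega⟩)

lemma spider_edge {e : Sym2 (Fin (2*q+1))} :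
    e ∈ (spider q).edgeSet ↔
      ∃ i, e = s(ctr q, mid q i) ∨ e = s(mid q i, leaf q i) := by
  induction e using Sym2.ind with
  | _ u v =>
    rw [SimpleGraph.mem_edgeSet, spider_adj]
    constructor
    · rintro ⟨i, ⟨h1, h2⟩ | ⟨h1, h2⟩ | ⟨h1, h2⟩ | ⟨h1, h2⟩⟩
      · exact ⟨i, Or.inl (by rw [h1, h2])⟩
      · exact ⟨i, Or.inr (by rw [h1, h2])⟩
      · exact ⟨i, Or.inl (by rw [h1, h2, Sym2.eq_swap])⟩
      · exact ⟨i, Or.inr (by rw [h1, h2, Sym2.eq_swap])⟩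
    · rintro ⟨i, h | h⟩ <;> rw [Sym2.eq_iff] at h <;>
        rcases h with ⟨h1, h2⟩ | ⟨h1, h2⟩
      · exact ⟨i, Or.inl ⟨h1, h2⟩⟩
      · exact ⟨i, Or.inr (Or.inr (Or.inl ⟨h2, h1⟩))⟩
      · exact ⟨i, Or.inr (Or.inl ⟨h1, h2⟩)⟩
      · exact ⟨i, Or.inr (Or.inr (Or.inr ⟨h2, h1⟩))⟩

end Spider

section Tree

variable {q : ℕ}

lemma spider_connected (hq : 1 ≤ q) : (spider q).Connected := by
  have hreach : ∀ v : Fin (2*q+1), (spider q).Reachable v (ctr q) := by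
    intro v
    rcases vert_cases v with rfl | ⟨i, rfl⟩ | ⟨i, rfl⟩
    · exact Reachable.refl _
    · exact (adj_ctr.mpr ⟨i, rfl⟩).reachable
    · exact ((adj_leaf.mpr rfl).symm.reachable).trans (adj_ctr.mpr ⟨i, rfl⟩).reachable
  rw [connected_iff]
  exact ⟨fun u v => (hreach u).trans (hreach v).symm, ⟨ctr q⟩⟩

lemma no_reach {W : Type*} {H : SimpleGraph W} (f : W → Prop)
    (h : ∀ a b, H.Adj a b → (f a ↔ f b)) {u v : W} (hu : f u) (hv : ¬ f v) :
    ¬ H.Reachable u v := fun hr => hv ((reachable_invariant f h hr).mp hu)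

lemma spider_acyclic : (spider q).IsAcyclic := by
  rw [isAcyclic_iff_forall_adj_isBridge]
  intro v w hvw
  rw [isBridge_iff]
  show ¬ ((spider q) \ fromEdgeSet {s(v, w)}).Reachable v w
  have he : s(v, w) ∈ (spider q).edgeSet := hvw
  rw [spider_edge] at he
  obtain ⟨i, he⟩ := he
  have hadj : ∀ a b : Fin (2*q+1),
      ((spider q) \ fromEdgeSet {s(v, w)}).Adj a b →
      (spider q).Adj a b ∧ s(a, b) ≠ s(v, w) := by
    intro a b hab
    rw [sdiff_adj, fromEdgeSet_adj] at hab
    exact ⟨hab.1, fun h => hab.2 ⟨by simp [h], hab.1.ne⟩⟩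
  rcases he with he | he
  · -- edge (ctr, mid i) : invariant "is mid i or leaf i"
    have hvw' : v = ctr q ∧ w = mid q i ∨ v = mid q i ∧ w = ctr q := by
      rwa [Sym2.eq_iff] at he
    set f : Fin (2*q+1) → Prop := fun x => x = mid q i ∨ x = leaf q i with hf
    have hfc : ¬ f (ctr q) := by
      rintro (h | h)
      · exact ctr_ne_mid h
      · exact ctr_ne_leaf h
    have hpres : ∀ a b, ((spider q) \ fromEdgeSet {s(v, w)}).Adj a b → (f a ↔ f b) := by
      intro a b hab
      obtain ⟨hab, hne⟩ := hadj a b hab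
      rw [he] at hne
      rw [spider_adj] at hab
      obtain ⟨j, ⟨h1, h2⟩ | ⟨h1, h2⟩ | ⟨h1, h2⟩ | ⟨h1, h2⟩⟩ := hab <;> subst h1 <;> subst h2
      · have hji : j ≠ i := fun hji => hne (by rw [hji])
        refine iff_of_false hfc ?_
        rintro (h | h)
        · exact hji (mid_inj h)
        · exact mid_ne_leaf h
      · simp only [hf]
        constructor
        · rintro (h | h)
          · exact Or.inr (by rw [← mid_inj h])
          · exact (mid_ne_leaf h).elim
        · rintro (h | h)
          · exact (mid_ne_leaf h.symm).elim
          · exact Or.inl (by rw [← leaf_inj h])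
      · have hji : j ≠ i := fun hji => hne (by rw [hji, Sym2.eq_swap])
        refine iff_of_false ?_ hfc
        rintro (h | h)
        · exact hji (mid_inj h)
        · exact mid_ne_leaf h
      · simp only [hf]
        constructor
        · rintro (h | h)
          · exact (mid_ne_leaf h.symm).elim
          · exact Or.inl (by rw [← leaf_inj h])
        · rintro (h | h)
          · exact Or.inr (by rw [← mid_inj h])
          · exact (mid_ne_leaf h).elim
    rcases hvw' with ⟨rfl, rfl⟩ | ⟨rfl, rfl⟩
    · intro hr
      exact no_reach f hpres (Or.inl rfl) hfc hr.symm
    · intro hr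
      exact no_reach f hpres (Or.inl rfl) hfc hr
  · -- edge (mid i, leaf i) : invariant "is leaf i"
    have hvw' : v = mid q i ∧ w = leaf q i ∨ v = leaf q i ∧ w = mid q i := by
      rwa [Sym2.eq_iff] at he
    set f : Fin (2*q+1) → Prop := fun x => x = leaf q i with hf
    have hpres : ∀ a b, ((spider q) \ fromEdgeSet {s(v, w)}).Adj a b → (f a ↔ f b) := by
      intro a b hab
      obtain ⟨hab, hne⟩ := hadj a b hab
      rw [he] at hne
      rw [spider_adj] at hab
      obtain ⟨j, ⟨h1, h2⟩ | ⟨h1, h2⟩ | ⟨h1, h2⟩ | ⟨h1, h2⟩⟩ := hab <;> subst h1 <;> subst h2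
      · exact iff_of_false ctr_ne_leaf (fun h => mid_ne_leaf h)
      · have hji : j ≠ i := fun hji => hne (by rw [hji])
        exact iff_of_false (fun h => mid_ne_leaf h) (fun h => hji (leaf_inj h))
      · exact iff_of_false (fun h => mid_ne_leaf h) ctr_ne_leaf
      · have hji : j ≠ i := fun hji => hne (by rw [hji, Sym2.eq_swap])
        exact iff_of_false (fun h => hji (leaf_inj h)) (fun h => mid_ne_leaf h)
    rcases hvw' with ⟨rfl, rfl⟩ | ⟨rfl, rfl⟩
    · intro hr
      exact no_reach f hpres rfl (fun h => mid_ne_leaf h) hr.symm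
    · intro hr
      exact no_reach f hpres rfl (fun h => mid_ne_leaf h) hr

lemma spider_isTree (hq : 1 ≤ q) : (spider q).IsTree :=
  ⟨spider_connected hq, spider_acyclic⟩

end Tree

section Edges

variable {q : ℕ}

lemma aedge_ne_bedge {i j : Fin q} : s(ctr q, mid q i) ≠ s(mid q j, leaf q j) := by
  intro h
  rw [Sym2.eq_iff] at h
  rcases h with ⟨h1, h2⟩ | ⟨h1, h2⟩
  · exact ctr_ne_mid h1
  · exact ctr_ne_leaf h1

lemma aedge_inj {i j : Fin q} (h : s(ctr q, mid q i) = s(ctr q, mid q j)) : i = j := by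
  rw [Sym2.eq_iff] at h
  rcases h with ⟨h1, h2⟩ | ⟨h1, h2⟩
  · exact mid_inj h2
  · exact absurd h1 ctr_ne_mid

lemma bedge_inj {i j : Fin q} (h : s(mid q i, leaf q i) = s(mid q j, leaf q j)) : i = j := by
  rw [Sym2.eq_iff] at h
  rcases h with ⟨h1, h2⟩ | ⟨h1, h2⟩
  · exact mid_inj h1
  · exact absurd h1 mid_ne_leaf

end Edges

section Bounds

variable {q : ℕ}

lemma spider_domNum_le (hq : 1 ≤ q) : (spider q).domNum ≤ q := by
  classical
  have hcard : ((Finset.univ : Finset (Fin q)).image (mid q)).card = q := by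
    rw [Finset.card_image_of_injective _ (fun i j h => mid_inj h), Finset.card_univ,
      Fintype.card_fin]
  refine le_trans (domNum_le _ _ ?_) (le_of_eq hcard)
  intro v hv
  rcases vert_cases v with rfl | ⟨i, rfl⟩ | ⟨i, rfl⟩
  · exact ⟨mid q ⟨0, hq⟩, by simp, adj_ctr.mpr ⟨_, rfl⟩⟩
  · exact absurd (by simp : mid q i ∈ _) hv
  · exact ⟨mid q i, by simp, adj_leaf.mpr rfl⟩

lemma spider_le_domNum : q ≤ (spider q).domNum := by
  classical
  have hcard : ((Finset.univ : Finset (Fin q)).image (leaf q)).card = q := by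
    rw [Finset.card_image_of_injective _ (fun i j h => leaf_inj h), Finset.card_univ,
      Fintype.card_fin]
  refine le_trans (le_of_eq hcard.symm) (packing_le_domNum _ _ ?_)
  intro p hp p' hp' hne d hd hd'
  simp only [Finset.mem_image, Finset.mem_univ, true_and] at hp hp'
  obtain ⟨i, rfl⟩ := hp
  obtain ⟨j, rfl⟩ := hp'
  have hij : i ≠ j := fun h => hne (by rw [h])
  have hdi : d = leaf q i ∨ d = mid q i := by
    rcases hd with rfl | hd
    · exact Or.inl rfl
    · exact Or.inr (adj_leaf.mp hd)
  have hdj : d = leaf q j ∨ d = mid q j := by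
    rcases hd' with rfl | hd'
    · exact Or.inl rfl
    · exact Or.inr (adj_leaf.mp hd')
  rcases hdi with rfl | rfl <;> rcases hdj with h | h
  · exact hij (leaf_inj h)
  · exact mid_ne_leaf h.symm
  · exact mid_ne_leaf h
  · exact hij (mid_inj h)

end Bounds

section Closed

variable {q : ℕ} {F : Finset (Sym2 (Fin (2*q+1)))}

lemma closed_leaf_subdiv (hF : ↑F ⊆ (spider q).edgeSet) {i : Fin q}
    {d : Fin (2*q+1) ⊕ {e : Sym2 (Fin (2*q+1)) // e ∈ F}}
    (hd : d = Sum.inl (leaf q i) ∨ ((spider q).subdiv F).Adj d (Sum.inl (leaf q i))) :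
    d = Sum.inl (leaf q i) ∨
    (d = Sum.inl (mid q i) ∧ s(mid q i, leaf q i) ∉ F) ∨
    (∃ h : s(mid q i, leaf q i) ∈ F, d = Sum.inr ⟨s(mid q i, leaf q i), h⟩) := by
  rcases hd with rfl | hd
  · exact Or.inl rfl
  cases d with
  | inl v =>
    rw [subdiv_adj_inl_inl] at hd
    obtain ⟨hadj, hmem⟩ := hd
    have hv : v = mid q i := adj_leaf.mp hadj
    subst hv
    exact Or.inr (Or.inl ⟨rfl, hmem⟩)
  | inr e =>
    rw [subdiv_adj_inr_inl] at hd
    have he : (e : Sym2 (Fin (2*q+1))) ∈ (spider q).edgeSet := hF e.2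
    rw [spider_edge] at he
    obtain ⟨t, ht | ht⟩ := he
    · rw [ht, Sym2.mem_iff] at hd
      rcases hd with hd | hd
      · exact absurd hd.symm ctr_ne_leaf
      · exact absurd hd.symm mid_ne_leaf
    · rw [ht, Sym2.mem_iff] at hd
      rcases hd with hd | hd
      · exact absurd hd.symm mid_ne_leaf
      · have : t = i := leaf_inj hd.symm
        subst this
        refine Or.inr (Or.inr ⟨ht ▸ e.2, ?_⟩)
        congr 1
        exact Subtype.ext ht
  
lemma closed_ctr_subdiv (hF : ↑F ⊆ (spider q).edgeSet)
    {d : Fin (2*q+1) ⊕ {e : Sym2 (Fin (2*q+1)) // e ∈ F}}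
    (hd : d = Sum.inl (ctr q) ∨ ((spider q).subdiv F).Adj d (Sum.inl (ctr q))) :
    d = Sum.inl (ctr q) ∨
    (∃ i, d = Sum.inl (mid q i) ∧ s(ctr q, mid q i) ∉ F) ∨
    (∃ i, ∃ h : s(ctr q, mid q i) ∈ F, d = Sum.inr ⟨s(ctr q, mid q i), h⟩) := by
  rcases hd with rfl | hd
  · exact Or.inl rfl
  cases d with
  | inl v =>
    rw [subdiv_adj_inl_inl] at hd
    obtain ⟨hadj, hmem⟩ := hd
    obtain ⟨i, hv⟩ := adj_ctr.mp hadj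
    subst hv
    rw [Sym2.eq_swap] at hmem
    exact Or.inr (Or.inl ⟨i, rfl, hmem⟩)
  | inr e =>
    rw [subdiv_adj_inr_inl] at hd
    have he : (e : Sym2 (Fin (2*q+1))) ∈ (spider q).edgeSet := hF e.2
    rw [spider_edge] at he
    obtain ⟨t, ht | ht⟩ := he
    · refine Or.inr (Or.inr ⟨t, ht ▸ e.2, ?_⟩)
      congr 1
      exact Subtype.ext ht
    · rw [ht, Sym2.mem_iff] at hd
      rcases hd with hd | hd
      · exact absurd hd ctr_ne_mid
      · exact absurd hd ctr_ne_leaf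

lemma closed_sub_subdiv {j : Fin q} (h : s(ctr q, mid q j) ∈ F)
    {d : Fin (2*q+1) ⊕ {e : Sym2 (Fin (2*q+1)) // e ∈ F}}
    (hd : d = Sum.inr ⟨s(ctr q, mid q j), h⟩ ∨
      ((spider q).subdiv F).Adj d (Sum.inr ⟨s(ctr q, mid q j), h⟩)) :
    d = Sum.inr ⟨s(ctr q, mid q j), h⟩ ∨ d = Sum.inl (ctr q) ∨ d = Sum.inl (mid q j) := by
  rcases hd with rfl | hd
  · exact Or.inl rfl
  cases d with
  | inl v =>
    rw [subdiv_adj_inl_inr] at hd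
    rw [Sym2.mem_iff] at hd
    rcases hd with rfl | rfl
    · exact Or.inr (Or.inl rfl)
    · exact Or.inr (Or.inr rfl)
  | inr e =>
    exact absurd hd subdiv_not_adj_inr_inr

end Closed

section Pairs

variable {q : ℕ} {F : Finset (Sym2 (Fin (2*q+1)))}

/-- Closed neighborhoods of two distinct leaves are disjoint in any subdivision. -/
lemma pair_leaf_leaf (hF : ↑F ⊆ (spider q).edgeSet) {i j : Fin q} (hij : i ≠ j)
    {d : Fin (2*q+1) ⊕ {e : Sym2 (Fin (2*q+1)) // e ∈ F}}
    (hdi : d = Sum.inl (leaf q i) ∨ ((spider q).subdiv F).Adj d (Sum.inl (leaf q i)))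
    (hdj : d = Sum.inl (leaf q j) ∨ ((spider q).subdiv F).Adj d (Sum.inl (leaf q j))) :
    False := by
  rcases closed_leaf_subdiv hF hdi with rfl | ⟨rfl, hbi⟩ | ⟨hbi, rfl⟩ <;>
    rcases closed_leaf_subdiv hF hdj with h | ⟨h, hbj⟩ | ⟨hbj, h⟩
  · exact hij (leaf_inj (Sum.inl.inj h))
  · exact mid_ne_leaf (Sum.inl.inj h).symm
  · exact (Sum.inl_ne_inr h).elim
  · exact mid_ne_leaf (Sum.inl.inj h)
  · exact hij (mid_inj (Sum.inl.inj h))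
  · exact (Sum.inl_ne_inr h).elim
  · exact (Sum.inr_ne_inl h).elim
  · exact (Sum.inr_ne_inl h).elim
  · exact hij (bedge_inj (Subtype.ext_iff.mp (Sum.inr.inj h)))

/-- If leg `i` has an edge in `F`, the closed neighborhoods of the center and of
leaf `i` are disjoint in the subdivision. -/
lemma pair_ctr_leaf (hF : ↑F ⊆ (spider q).edgeSet) {i : Fin q}
    (hi : s(ctr q, mid q i) ∈ F ∨ s(mid q i, leaf q i) ∈ F)
    {d : Fin (2*q+1) ⊕ {e : Sym2 (Fin (2*q+1)) // e ∈ F}}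
    (hdc : d = Sum.inl (ctr q) ∨ ((spider q).subdiv F).Adj d (Sum.inl (ctr q)))
    (hdi : d = Sum.inl (leaf q i) ∨ ((spider q).subdiv F).Adj d (Sum.inl (leaf q i))) :
    False := by
  rcases closed_ctr_subdiv hF hdc with rfl | ⟨t, rfl, hat⟩ | ⟨t, hat, rfl⟩ <;>
    rcases closed_leaf_subdiv hF hdi with h | ⟨h, hbi⟩ | ⟨hbi, h⟩
  · exact ctr_ne_leaf (Sum.inl.inj h)
  · exact ctr_ne_mid (Sum.inl.inj h)
  · exact (Sum.inl_ne_inr h).elim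
  · exact mid_ne_leaf (Sum.inl.inj h)
  · -- d = mid t = mid i with a t ∉ F and b i ∉ F
    have : t = i := mid_inj (Sum.inl.inj h)
    subst this
    rcases hi with hi | hi
    · exact hat hi
    · exact hbi hi
  · exact (Sum.inl_ne_inr h).elim
  · exact (Sum.inr_ne_inl h).elim
  · exact (Sum.inr_ne_inl h).elim
  · exact aedge_ne_bedge (Subtype.ext_iff.mp (Sum.inr.inj h))

/-- If both edges of leg `j` are in `F`, the closed neighborhood of the subdivision
vertex on the center edge of leg `j` is disjoint from that of any leaf. -/
lemma pair_sub_leaf (hF : ↑F ⊆ (spider q).edgeSet) {j : Fin q}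
    (haj : s(ctr q, mid q j) ∈ F) (hbj : s(mid q j, leaf q j) ∈ F) {i : Fin q}
    {d : Fin (2*q+1) ⊕ {e : Sym2 (Fin (2*q+1)) // e ∈ F}}
    (hds : d = Sum.inr ⟨s(ctr q, mid q j), haj⟩ ∨
      ((spider q).subdiv F).Adj d (Sum.inr ⟨s(ctr q, mid q j), haj⟩))
    (hdi : d = Sum.inl (leaf q i) ∨ ((spider q).subdiv F).Adj d (Sum.inl (leaf q i))) :
    False := by
  rcases closed_sub_subdiv haj hds with rfl | rfl | rfl <;>
    rcases closed_leaf_subdiv hF hdi with h | ⟨h, hbi⟩ | ⟨hbi, h⟩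
  · exact (Sum.inr_ne_inl h).elim
  · exact (Sum.inr_ne_inl h).elim
  · exact aedge_ne_bedge (Subtype.ext_iff.mp (Sum.inr.inj h))
  · exact ctr_ne_leaf (Sum.inl.inj h)
  · exact ctr_ne_mid (Sum.inl.inj h)
  · exact (Sum.inl_ne_inr h).elim
  · exact mid_ne_leaf (Sum.inl.inj h)
  · have : j = i := mid_inj (Sum.inl.inj h)
    subst this
    exact hbi hbj
  · exact (Sum.inl_ne_inr h).elim

end Pairs

section Dichotomy

variable {q : ℕ}

lemma dichotomy {F : Finset (Sym2 (Fin (2*q+1)))} (hF : ↑F ⊆ (spider q).edgeSet)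
    (hcard : F.card = q) :
    (∃ j, s(ctr q, mid q j) ∈ F ∧ s(mid q j, leaf q j) ∈ F) ∨
    (∀ i, s(ctr q, mid q i) ∈ F ∨ s(mid q i, leaf q i) ∈ F) := by
  classical
  by_cases hB : ∃ j, s(ctr q, mid q j) ∈ F ∧ s(mid q j, leaf q j) ∈ F
  · exact Or.inl hB
  push_neg at hB
  right
  set ψ : Fin q → Finset (Sym2 (Fin (2*q+1))) :=
    fun i => F.filter (fun e => e = s(ctr q, mid q i) ∨ e = s(mid q i, leaf q i)) with hψ
  have hFeq : F = Finset.univ.biUnion ψ := by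
    ext e
    simp only [Finset.mem_biUnion, Finset.mem_univ, true_and, hψ, Finset.mem_filter]
    constructor
    · intro he
      have := hF he
      rw [spider_edge] at this
      obtain ⟨i, h⟩ := this
      exact ⟨i, he, h⟩
    · rintro ⟨i, he, _⟩
      exact he
  have hdisj : ∀ i ∈ (Finset.univ : Finset (Fin q)), ∀ j ∈ (Finset.univ : Finset (Fin q)),
      i ≠ j → Disjoint (ψ i) (ψ j) := by
    intro i _ j _ hij
    rw [Finset.disjoint_left]
    intro e hei hej
    simp only [hψ, Finset.mem_filter] at hei hej
    rcases hei.2 with h1 | h1 <;> rcases hej.2 with h2 | h2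
    · exact hij (aedge_inj (h1.symm.trans h2))
    · exact aedge_ne_bedge (h1.symm.trans h2)
    · exact aedge_ne_bedge (h2.symm.trans h1)
    · exact hij (bedge_inj (h1.symm.trans h2))
  have hsum : ∑ i : Fin q, (ψ i).card = q := by
    rw [← Finset.card_biUnion hdisj, ← hFeq, hcard]
  have hle1 : ∀ i : Fin q, (ψ i).card ≤ 1 := by
    intro i
    rw [Finset.card_le_one]
    intro e1 he1 e2 he2
    simp only [hψ, Finset.mem_filter] at he1 he2
    rcases he1.2 with h1 | h1 <;> rcases he2.2 with h2 | h2
    · exact h1.trans h2.symm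
    · exact absurd (h2 ▸ he2.1) (hB i (h1 ▸ he1.1))
    · exact absurd (h1 ▸ he1.1) (hB i (h2 ▸ he2.1))
    · exact h1.trans h2.symm
  have hall : ∀ i : Fin q, (ψ i).card = 1 := by
    by_contra hcon
    push_neg at hcon
    obtain ⟨i0, hi0⟩ := hcon
    have hi0' : (ψ i0).card = 0 := by
      have := hle1 i0
      omega
    have hlt : ∑ i : Fin q, (ψ i).card < ∑ i : Fin q, 1 :=
      Finset.sum_lt_sum (fun i _ => hle1 i) ⟨i0, Finset.mem_univ i0, by omega⟩
    rw [hsum, Finset.sum_const, Finset.card_univ, Fintype.card_fin, smul_eq_mul, mul_one] at hlt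
    exact lt_irrefl q hlt
  intro i
  have := hall i
  rw [Finset.card_eq_one] at this
  obtain ⟨e, he⟩ := this
  have hee : e ∈ ψ i := he ▸ Finset.mem_singleton_self e
  simp only [hψ, Finset.mem_filter] at hee
  rcases hee.2 with h | h
  · exact Or.inl (h ▸ hee.1)
  · exact Or.inr (h ▸ hee.1)

end Dichotomy

section Main

variable {q : ℕ}

lemma subdiv_lb {F : Finset (Sym2 (Fin (2*q+1)))} (hF : ↑F ⊆ (spider q).edgeSet)
    (hcard : F.card = q) : q + 1 ≤ ((spider q).subdiv F).domNum := by
  classical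
  have hleafcard :
      ((Finset.univ : Finset (Fin q)).image
        (fun i => (Sum.inl (leaf q i) : Fin (2*q+1) ⊕ {e : Sym2 (Fin (2*q+1)) // e ∈ F}))).card
        = q := by
    rw [Finset.card_image_of_injective _
      (fun i j h => leaf_inj (Sum.inl.inj h)), Finset.card_univ, Fintype.card_fin]
  rcases dichotomy hF hcard with ⟨j, haj, hbj⟩ | hall
  · -- some leg fully subdivided: extra packing vertex is the subdivision vertex
    set p : Fin (2*q+1) ⊕ {e : Sym2 (Fin (2*q+1)) // e ∈ F} :=
      Sum.inr ⟨s(ctr q, mid q j), haj⟩ with hp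
    set P := insert p ((Finset.univ : Finset (Fin q)).image
        (fun i => (Sum.inl (leaf q i) : Fin (2*q+1) ⊕ {e : Sym2 (Fin (2*q+1)) // e ∈ F})))
      with hP
    have hcardP : P.card = q + 1 := by
      rw [hP, Finset.card_insert_of_notMem, hleafcard]
      simp only [Finset.mem_image, Finset.mem_univ, true_and, hp]
      rintro ⟨i, h⟩
      exact Sum.inr_ne_inl h.symm
    calc q + 1 = P.card := hcardP.symm
      _ ≤ _ := by
        apply packing_le_domNum
        intro p1 hp1 p2 hp2 hne d hd1 hd2
        simp only [hP, Finset.mem_insert, Finset.mem_image, Finset.mem_univ, true_and]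
          at hp1 hp2
        rcases hp1 with rfl | ⟨i1, rfl⟩ <;> rcases hp2 with rfl | ⟨i2, rfl⟩
        · exact hne rfl
        · exact pair_sub_leaf hF haj hbj hd1 hd2
        · exact pair_sub_leaf hF haj hbj hd2 hd1
        · exact pair_leaf_leaf hF (fun h => hne (by rw [h])) hd1 hd2
  · -- every leg has a subdivided edge: extra packing vertex is the center
    set p : Fin (2*q+1) ⊕ {e : Sym2 (Fin (2*q+1)) // e ∈ F} := Sum.inl (ctr q) with hp
    set P := insert p ((Finset.univ : Finset (Fin q)).image
        (fun i => (Sum.inl (leaf q i) : Fin (2*q+1) ⊕ {e : Sym2 (Fin (2*q+1)) // e ∈ F})))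
      with hP
    have hcardP : P.card = q + 1 := by
      rw [hP, Finset.card_insert_of_notMem, hleafcard]
      simp only [Finset.mem_image, Finset.mem_univ, true_and, hp]
      rintro ⟨i, h⟩
      exact ctr_ne_leaf (Sum.inl.inj h.symm)
    calc q + 1 = P.card := hcardP.symm
      _ ≤ _ := by
        apply packing_le_domNum
        intro p1 hp1 p2 hp2 hne d hd1 hd2
        simp only [hP, Finset.mem_insert, Finset.mem_image, Finset.mem_univ, true_and]
          at hp1 hp2
        rcases hp1 with rfl | ⟨i1, rfl⟩ <;> rcases hp2 with rfl | ⟨i2, rfl⟩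
        · exact hne rfl
        · exact pair_ctr_leaf hF (hall i2) hd1 hd2
        · exact pair_ctr_leaf hF (hall i1) hd2 hd1
        · exact pair_leaf_leaf hF (fun h => hne (by rw [h])) hd1 hd2

lemma cond2 (hq : 1 ≤ q) :
    ∃ F : Finset (Sym2 (Fin (2*q+1))), ↑F ⊆ (spider q).edgeSet ∧ F.card = q - 1 ∧
      ((spider q).subdiv F).domNum = (spider q).domNum := by
  classical
  set i0 : Fin q := ⟨0, hq⟩ with hi0
  set F : Finset (Sym2 (Fin (2*q+1))) :=
    (Finset.univ.erase i0).image (fun i => s(ctr q, mid q i)) with hF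
  have hmemF : ∀ e, e ∈ F ↔ ∃ i, i ≠ i0 ∧ e = s(ctr q, mid q i) := by
    intro e
    simp only [hF, Finset.mem_image, Finset.mem_erase, Finset.mem_univ, and_true]
    constructor
    · rintro ⟨i, hi, rfl⟩
      exact ⟨i, hi, rfl⟩
    · rintro ⟨i, hi, rfl⟩
      exact ⟨i, hi, rfl⟩
  have hFsub : ↑F ⊆ (spider q).edgeSet := by
    intro e he
    rw [Finset.mem_coe, hmemF] at he
    obtain ⟨i, _, rfl⟩ := he
    rw [spider_edge]
    exact ⟨i, Or.inl rfl⟩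
  have hFcard : F.card = q - 1 := by
    rw [hF, Finset.card_image_of_injective _ (fun i j h => aedge_inj h),
      Finset.card_erase_of_mem (Finset.mem_univ i0), Finset.card_univ, Fintype.card_fin]
  refine ⟨F, hFsub, hFcard, ?_⟩
  -- upper bound q for the subdivided graph
  have hub : ((spider q).subdiv F).domNum ≤ q := by
    have hcard : ((Finset.univ : Finset (Fin q)).image
        (fun i => (Sum.inl (mid q i) : Fin (2*q+1) ⊕ {e : Sym2 (Fin (2*q+1)) // e ∈ F}))).card
        = q := by
      rw [Finset.card_image_of_injective _
        (fun i j h => mid_inj (Sum.inl.inj h)), Finset.card_univ, Fintype.card_fin]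
    refine le_trans (domNum_le _ _ ?_) (le_of_eq hcard)
    intro v hv
    cases v with
    | inl u =>
      rcases vert_cases u with rfl | ⟨i, rfl⟩ | ⟨i, rfl⟩
      · refine ⟨Sum.inl (mid q i0), by simp, ?_⟩
        rw [subdiv_adj_inl_inl]
        refine ⟨adj_ctr.mpr ⟨i0, rfl⟩, ?_⟩
        rw [hmemF]
        rintro ⟨i, hi, he⟩
        rw [Sym2.eq_swap] at he
        exact hi (aedge_inj he.symm)
      · exact absurd (by simp : (Sum.inl (mid q i) : _) ∈ _) hv
      · refine ⟨Sum.inl (mid q i), by simp, ?_⟩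
        rw [subdiv_adj_inl_inl]
        refine ⟨adj_leaf.mpr rfl, ?_⟩
        rw [hmemF]
        rintro ⟨t, ht, he⟩
        exact aedge_ne_bedge he.symm
    | inr e =>
      obtain ⟨t, ht, hev⟩ := (hmemF e.1).mp e.2
      refine ⟨Sum.inl (mid q t), by simp, ?_⟩
      rw [subdiv_adj_inl_inr, hev, Sym2.mem_iff]
      exact Or.inr rfl
  -- lower bound q for the subdivided graph
  have hlb : q ≤ ((spider q).subdiv F).domNum := by
    have hcard : ((Finset.univ : Finset (Fin q)).image
        (fun i => (Sum.inl (leaf q i) : Fin (2*q+1) ⊕ {e : Sym2 (Fin (2*q+1)) // e ∈ F}))).card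
        = q := by
      rw [Finset.card_image_of_injective _
        (fun i j h => leaf_inj (Sum.inl.inj h)), Finset.card_univ, Fintype.card_fin]
    refine le_trans (le_of_eq hcard.symm) (packing_le_domNum _ _ ?_)
    intro p1 hp1 p2 hp2 hne d hd1 hd2
    simp only [Finset.mem_image, Finset.mem_univ, true_and] at hp1 hp2
    obtain ⟨i1, rfl⟩ := hp1
    obtain ⟨i2, rfl⟩ := hp2
    exact pair_leaf_leaf hFsub (fun h => hne (by rw [h])) hd1 hd2
  have h1 := spider_domNum_le hq
  have h2 := spider_le_domNum (q := q)
  omega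

end Main


theorem stmt10 (q : ℕ) (hq : 1 ≤ q) :
    ∃ (n : ℕ) (T : SimpleGraph (Fin n)), T.IsTree ∧ T.IsQCritical q := by
  refine ⟨2*q+1, spider q, spider_isTree hq, ⟨?_, cond2 hq⟩⟩
  intro F hF hcard
  have h1 := spider_domNum_le hq
  have h2 := subdiv_lb hF hcard
  omega
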